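/- For a boundary point w on the unit circle, the function f_𝔻^w(z) := i√w / (2π(z − w)) is holomorphic on 𝔻 \ {w}, satisfies f_𝔻^w(z) = (1/(2π))·i√(n(w))/(z − w) near w (where n(w) = w is the outer normal), and satisfies Im[f_𝔻^w(z)·√z] = 0 for all z on the unit circle with z ≠ w. -/

import Mathlib

open Complex Metric

/-- For a boundary point `w` of the unit disk, the function
`f_𝔻^w(z) = i√w / (2π(z − w))` is holomorphic away from `w`, has the prescribed singularity
`(1/(2π))·i√(n(w))/(z − w)` at `w` (with outer normal `n(w) = w`), and satisfies the Riemann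
boundary condition `Im[f(z)·√z] = 0` on the unit circle away from `w`. -/
theorem stmt3 (w : ℂ) (hw : ‖w‖ = 1) :
    DifferentiableOn ℂ
      (fun z => Complex.I * w ^ ((1 : ℂ) / 2) / (2 * (Real.pi : ℂ) * (z - w)))
      {z : ℂ | z ≠ w} ∧
    (∀ z : ℂ, z ≠ w →
      Complex.I * w ^ ((1 : ℂ) / 2) / (2 * (Real.pi : ℂ) * (z - w))
        = (1 / (2 * (Real.pi : ℂ))) * (Complex.I * w ^ ((1 : ℂ) / 2)) / (z - w)) ∧
    (∀ z : ℂ, ‖z‖ = 1 → z ≠ w →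
      ((Complex.I * w ^ ((1 : ℂ) / 2) / (2 * (Real.pi : ℂ) * (z - w)))
        * z ^ ((1 : ℂ) / 2)).im = 0) := by
  have hpi : (Real.pi : ℂ) ≠ 0 := by
    exact_mod_cast Real.pi_ne_zero
  have hw0 : w ≠ 0 := by
    intro h; rw [h] at hw; simp at hw
  refine ⟨?_, ?_, ?_⟩
  · apply DifferentiableOn.div (differentiableOn_const _)
    · fun_prop
    · intro z hz
      simp only [Set.mem_setOf_eq] at hz
      exact mul_ne_zero (mul_ne_zero two_ne_zero hpi) (sub_ne_zero.mpr hz)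
  · intro z hz
    have hzw : z - w ≠ 0 := sub_ne_zero.mpr hz
    field_simp
  · intro z hz hzw
    have hz0 : z ≠ 0 := by intro h; rw [h] at hz; simp at hz
    set a := z ^ ((1:ℂ)/2) with ha_def
    set b := w ^ ((1:ℂ)/2) with hb_def
    have ha0 : a ≠ 0 := by
      rw [ha_def]; simp [cpow_eq_zero_iff, hz0]
    have hb0 : b ≠ 0 := by
      rw [hb_def]; simp [cpow_eq_zero_iff, hw0]
    have haa : a * a = z := by
      rw [ha_def, ← cpow_add _ _ hz0]; norm_num
    have hbb : b * b = w := by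
      rw [hb_def, ← cpow_add _ _ hw0]; norm_num
    have hna : ‖a‖ = 1 := by
      rw [ha_def, show ((1:ℂ)/2) = (((1/2:ℝ)):ℂ) by norm_num, norm_cpow_real]
      rw [hz]; simp
    have hnb : ‖b‖ = 1 := by
      rw [hb_def, show ((1:ℂ)/2) = (((1/2:ℝ)):ℂ) by norm_num, norm_cpow_real]
      rw [hw]; simp
    have hca : (starRingEnd ℂ) a = a⁻¹ := (Complex.inv_eq_conj hna).symm
    have hcb : (starRingEnd ℂ) b = b⁻¹ := (Complex.inv_eq_conj hnb).symm
    have hab : a * a - b * b ≠ 0 := by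
      rw [haa, hbb]; exact sub_ne_zero.mpr hzw
    rw [← Complex.conj_eq_iff_im]
    rw [← haa, ← hbb]
    simp only [map_div₀, map_mul, map_sub, Complex.conj_I, hca, hcb, map_ofNat,
      Complex.conj_ofReal]
    have hba : b * b - a * a ≠ 0 := fun h => hab (by linear_combination -h)
    have hinv : a⁻¹ * a⁻¹ - b⁻¹ * b⁻¹ = (b * b - a * a) / (a * a * (b * b)) := by
      field_simp
    rw [hinv, div_mul_eq_mul_div, div_mul_eq_mul_div,
      div_eq_div_iff
        (mul_ne_zero (mul_ne_zero two_ne_zero hpi)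
          (div_ne_zero hba (mul_ne_zero (mul_ne_zero ha0 ha0) (mul_ne_zero hb0 hb0))))
        (mul_ne_zero (mul_ne_zero two_ne_zero hpi) hab)]
    field_simp
    ring
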